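/- Let κ = 3^{2/3}/2^{1/3}. For every α ∈ ℝ with α ∉ √2/3 + 2πℤ, the Melnikov function M₊ is differentiable at α and M₊'(α) = I₁(α) − I₂(α), where I₁(α) = κ ∫₀^{+∞} [ s^{2/3} cos(α−s) (1+κ²s^{4/3}−2κ s^{2/3}cos(α−s))^{−3/2} − 3κ s^{4/3} sin²(α−s) (1+κ²s^{4/3}−2κ s^{2/3}cos(α−s))^{−5/2} ] ds and I₂(α) = √(2/κ) lim_{T→+∞} ∫₀^{T} sin(α−s) s^{−1/3} ds, both integrals being convergent. -/

import Mathlib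

open Real Filter MeasureTheory intervalIntegral
open scoped Topology

/-- The constant `κ = 3^{2/3}/2^{1/3}`. -/
noncomputable def kap : ℝ := (3 : ℝ) ^ ((2 : ℝ) / 3) / (2 : ℝ) ^ ((1 : ℝ) / 3)

/-- The (absolutely convergent) integrand of the Melnikov function `M₊`. -/
noncomputable def melInt (α s : ℝ) : ℝ :=
  s ^ ((2 : ℝ) / 3) * Real.sin (α - s) *
    (1 + kap ^ 2 * s ^ ((4 : ℝ) / 3)
      - 2 * kap * s ^ ((2 : ℝ) / 3) * Real.cos (α - s)) ^ (-(3 / 2) : ℝ)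

/-- The Melnikov function
`M₊(α) = κ ∫₀^∞ melInt(α,s) ds + √(2/κ) · lim_{T→∞} ∫₀^T cos(α-s) s^{-1/3} ds`. -/
noncomputable def Mplus (α : ℝ) : ℝ :=
  kap * (∫ s in Set.Ioi (0 : ℝ), melInt α s) +
    Real.sqrt (2 / kap) *
      limUnder atTop (fun T => ∫ s in (0 : ℝ)..T, Real.cos (α - s) * s ^ (-(1 / 3) : ℝ))

/-- The integrand `F(θ,s)` of the non-oscillatory part `I₁` of `M₊'`. -/
noncomputable def Fder (θ s : ℝ) : ℝ :=
  s ^ ((2 : ℝ) / 3) * Real.cos (θ - s) *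
    (1 + kap ^ 2 * s ^ ((4 : ℝ) / 3)
      - 2 * kap * s ^ ((2 : ℝ) / 3) * Real.cos (θ - s)) ^ (-(3 / 2) : ℝ)
  - 3 * kap * s ^ ((4 : ℝ) / 3) * Real.sin (θ - s) ^ 2 *
    (1 + kap ^ 2 * s ^ ((4 : ℝ) / 3)
      - 2 * kap * s ^ ((2 : ℝ) / 3) * Real.cos (θ - s)) ^ (-(5 / 2) : ℝ)

/-! ### Auxiliary definitions and lemmas -/

noncomputable def bfun (x s : ℝ) : ℝ :=
  1 + kap ^ 2 * s ^ ((4 : ℝ) / 3) - 2 * kap * s ^ ((2 : ℝ) / 3) * Real.cos (x - s)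

lemma kap_pos : 0 < kap :=
  div_pos (Real.rpow_pos_of_pos (by norm_num) _) (Real.rpow_pos_of_pos (by norm_num) _)

lemma bfun_eq (x s : ℝ) (hs : 0 ≤ s) :
    bfun x s = (1 - kap * s ^ ((2:ℝ)/3)) ^ 2
      + 2 * kap * s ^ ((2:ℝ)/3) * (1 - Real.cos (x - s)) := by
  have h2 : (s ^ ((2:ℝ)/3)) ^ (2:ℕ) = s ^ ((4:ℝ)/3) := by
    rw [← Real.rpow_natCast (s ^ ((2:ℝ)/3)) 2, ← Real.rpow_mul hs]; norm_num
  unfold bfun; rw [← h2]; ring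

lemma inv_kap_rpow : ((1:ℝ)/kap) ^ ((3:ℝ)/2) = Real.sqrt 2 / 3 := by
  unfold kap
  rw [one_div_div, Real.div_rpow (by positivity) (by positivity),
    ← Real.rpow_mul (by norm_num : (0:ℝ) ≤ 2), ← Real.rpow_mul (by norm_num : (0:ℝ) ≤ 3)]
  norm_num
  rw [Real.sqrt_eq_rpow]

lemma bfun_pos {x : ℝ} (hx : Real.cos (x - Real.sqrt 2 / 3) ≠ 1) {s : ℝ} (hs : 0 ≤ s) :
    0 < bfun x s := by
  rcases lt_or_ge 0 (bfun x s) with h | h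
  · exact h
  exfalso
  have htnn : 0 ≤ s ^ ((2:ℝ)/3) := Real.rpow_nonneg hs _
  have hcle : Real.cos (x - s) ≤ 1 := Real.cos_le_one _
  have heq := bfun_eq x s hs
  have hA : (0:ℝ) ≤ (1 - kap * s ^ ((2:ℝ)/3)) ^ 2 := sq_nonneg _
  have hB : (0:ℝ) ≤ 2 * kap * s ^ ((2:ℝ)/3) * (1 - Real.cos (x - s)) := by
    exact mul_nonneg (mul_nonneg (mul_nonneg (by norm_num) kap_pos.le) htnn) (by linarith)
  have hA0 : (1 - kap * s ^ ((2:ℝ)/3)) ^ 2 = 0 := by nlinarith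
  have hB0 : 2 * kap * s ^ ((2:ℝ)/3) * (1 - Real.cos (x - s)) = 0 := by nlinarith
  have hkt : kap * s ^ ((2:ℝ)/3) = 1 := by
    have := pow_eq_zero_iff (n := 2) (by norm_num) |>.mp hA0; linarith
  have hcos1 : Real.cos (x - s) = 1 := by
    have h2 : 2 * kap * s ^ ((2:ℝ)/3) = 2 := by nlinarith
    rw [h2] at hB0; linarith
  have hsval : s = Real.sqrt 2 / 3 := by
    have ht1 : s ^ ((2:ℝ)/3) = 1 / kap := by
      exact eq_one_div_of_mul_eq_one_left (by linarith [hkt] : s ^ ((2:ℝ)/3) * kap = 1)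
    have hss : s = (s ^ ((2:ℝ)/3)) ^ ((3:ℝ)/2) := by
      rw [← Real.rpow_mul hs]; norm_num
    rw [hss, ht1, inv_kap_rpow]
  obtain ⟨n, hn⟩ := (Real.cos_eq_one_iff _).mp hcos1
  rw [hsval] at hn
  apply hx
  rw [← hn]
  exact Real.cos_int_mul_two_pi n

lemma bfun_tail {x s : ℝ} (hs : 0 ≤ s) (h2 : 2 / kap ≤ s ^ ((2:ℝ)/3)) :
    kap ^ 2 / 4 * s ^ ((4:ℝ)/3) ≤ bfun x s := by
  have hk := kap_pos
  have hu : 2 ≤ kap * s ^ ((2:ℝ)/3) := by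
    rw [div_le_iff₀ hk] at h2; linarith [h2]
  have htnn : 0 ≤ s ^ ((2:ℝ)/3) := Real.rpow_nonneg hs _
  have hcle : Real.cos (x - s) ≤ 1 := Real.cos_le_one _
  have h43 : (s ^ ((2:ℝ)/3)) ^ (2:ℕ) = s ^ ((4:ℝ)/3) := by
    rw [← Real.rpow_natCast (s ^ ((2:ℝ)/3)) 2, ← Real.rpow_mul hs]; norm_num
  rw [bfun_eq x s hs, ← h43]
  nlinarith [sq_nonneg (kap * s ^ ((2:ℝ)/3) - 2),
    mul_nonneg (mul_nonneg (by linarith : (0:ℝ) ≤ 2 * kap) htnn)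
      (by linarith : 0 ≤ 1 - Real.cos (x - s))]

lemma melInt_eq (x s : ℝ) :
    melInt x s = s ^ ((2:ℝ)/3) * Real.sin (x - s) * (bfun x s) ^ (-(3/2) : ℝ) := rfl

lemma Fder_eq (x s : ℝ) :
    Fder x s = s ^ ((2:ℝ)/3) * Real.cos (x - s) * (bfun x s) ^ (-(3/2) : ℝ)
      - 3 * kap * s ^ ((4:ℝ)/3) * Real.sin (x - s) ^ 2 * (bfun x s) ^ (-(5/2) : ℝ) := rfl

lemma hasDerivAt_melInt {x s : ℝ} (hs : 0 < s) (hb : bfun x s ≠ 0) :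
    HasDerivAt (fun θ => melInt θ s) (Fder x s) x := by
  have h1 : HasDerivAt (fun θ : ℝ => θ - s) 1 x := (hasDerivAt_id x).sub_const s
  have hsin : HasDerivAt (fun θ => Real.sin (θ - s)) (Real.cos (x - s)) x := by
    simpa using h1.sin
  have hcos : HasDerivAt (fun θ => Real.cos (θ - s)) (-Real.sin (x - s)) x := by
    simpa using h1.cos
  have hbder : HasDerivAt (fun θ => bfun θ s)
      (2 * kap * s ^ ((2:ℝ)/3) * Real.sin (x - s)) x := by
    have h' := (hasDerivAt_const x (1 + kap ^ 2 * s ^ ((4:ℝ)/3))).sub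
      (hcos.const_mul (2 * kap * s ^ ((2:ℝ)/3)))
    have heq : (0 : ℝ) - 2 * kap * s ^ ((2:ℝ)/3) * -Real.sin (x - s)
        = 2 * kap * s ^ ((2:ℝ)/3) * Real.sin (x - s) := by ring
    rw [heq] at h'
    exact h'
  have hpow : HasDerivAt (fun θ => (bfun θ s) ^ (-(3/2) : ℝ))
      (2 * kap * s ^ ((2:ℝ)/3) * Real.sin (x - s) * (-(3/2)) *
        (bfun x s) ^ ((-(3/2) : ℝ) - 1)) x := hbder.rpow_const (Or.inl hb)
  have hleft : HasDerivAt (fun θ => s ^ ((2:ℝ)/3) * Real.sin (θ - s))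
      (s ^ ((2:ℝ)/3) * Real.cos (x - s)) x := hsin.const_mul _
  have hmul := hleft.mul hpow
  have hss : s ^ ((2:ℝ)/3) * s ^ ((2:ℝ)/3) = s ^ ((4:ℝ)/3) := by
    rw [← Real.rpow_add hs]; norm_num
  have hb52 : (bfun x s) ^ ((-(3/2) : ℝ) - 1) = (bfun x s) ^ (-(5/2) : ℝ) := by norm_num
  have hgoal : HasDerivAt (fun θ => melInt θ s)
      (s ^ ((2:ℝ)/3) * Real.cos (x - s) * (bfun x s) ^ (-(3/2):ℝ) +
        (s ^ ((2:ℝ)/3) * Real.sin (x - s)) *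
          (2 * kap * s ^ ((2:ℝ)/3) * Real.sin (x - s) * (-(3/2)) *
            (bfun x s) ^ ((-(3/2) : ℝ) - 1))) x := by
    exact hmul
  have hFeq : Fder x s = s ^ ((2:ℝ)/3) * Real.cos (x - s) * (bfun x s) ^ (-(3/2):ℝ) +
      (s ^ ((2:ℝ)/3) * Real.sin (x - s)) *
        (2 * kap * s ^ ((2:ℝ)/3) * Real.sin (x - s) * (-(3/2)) *
          (bfun x s) ^ ((-(3/2) : ℝ) - 1)) := by
    rw [Fder_eq, hb52, ← hss]; ring
  rw [hFeq]
  exact hgoal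

lemma contRpowConst {c : ℝ} (hc : 0 ≤ c) : Continuous (fun s : ℝ => s ^ c) :=
  continuous_iff_continuousAt.mpr fun x => Real.continuousAt_rpow_const x c (Or.inr hc)

lemma continuous_bfun : Continuous (fun p : ℝ × ℝ => bfun p.1 p.2) := by
  unfold bfun
  exact (continuous_const.add (continuous_const.mul
      ((contRpowConst (by norm_num)).comp continuous_snd))).sub
    ((continuous_const.mul ((contRpowConst (by norm_num)).comp continuous_snd)).mul
      (Real.continuous_cos.comp (continuous_fst.sub continuous_snd)))

lemma continuousOn_melInt {x : ℝ} (hb : ∀ s ∈ Set.Ioi (0:ℝ), bfun x s ≠ 0) :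
    ContinuousOn (fun s => melInt x s) (Set.Ioi 0) := by
  simp only [melInt_eq]
  have hbx : Continuous (fun s => bfun x s) :=
    continuous_bfun.comp (Continuous.prodMk_right x)
  exact (((contRpowConst (by norm_num)).continuousOn.mul
      (Real.continuous_sin.comp (continuous_const.sub continuous_id)).continuousOn)).mul
    (hbx.continuousOn.rpow_const fun s hs => Or.inl (hb s hs))

lemma continuousOn_Fder {x : ℝ} (hb : ∀ s ∈ Set.Ioi (0:ℝ), bfun x s ≠ 0) :
    ContinuousOn (fun s => Fder x s) (Set.Ioi 0) := by
  simp only [Fder_eq]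
  have hbx : Continuous (fun s => bfun x s) :=
    continuous_bfun.comp (Continuous.prodMk_right x)
  exact ((((contRpowConst (by norm_num)).continuousOn.mul
      (Real.continuous_cos.comp (continuous_const.sub continuous_id)).continuousOn)).mul
    (hbx.continuousOn.rpow_const fun s hs => Or.inl (hb s hs))).sub
    ((((continuous_const.mul (contRpowConst (by norm_num))).continuousOn.mul
      (((Real.continuous_sin.comp (continuous_const.sub continuous_id)).pow 2).continuousOn))).mul
    (hbx.continuousOn.rpow_const fun s hs => Or.inl (hb s hs)))

lemma osc_tendsto (v w : ℝ → ℝ) (hv : ∀ x, HasDerivAt v (w x) x)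
    (hvb : ∀ x, |v x| ≤ 1) (hwc : Continuous w) :
    ∃ L : ℝ, Tendsto (fun T => ∫ s in (0:ℝ)..T, w s * s ^ (-(1/3) : ℝ)) atTop (𝓝 L) := by
  have hvc : Continuous v := continuous_iff_continuousAt.mpr fun x => (hv x).continuousAt
  have hii : ∀ a b : ℝ, IntervalIntegrable (fun s => w s * s ^ (-(1/3):ℝ)) volume a b :=
    fun a b => (intervalIntegral.intervalIntegrable_rpow' (by norm_num)).continuousOn_mul
      hwc.continuousOn
  set g : ℝ → ℝ := fun s => (-(1/3) * s ^ ((-(1/3):ℝ) - 1)) * v s with hgdef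
  have hcontpow : ∀ t : Set ℝ, (∀ y ∈ t, y ≠ 0) →
      ContinuousOn (fun y : ℝ => -(1/3) * y ^ ((-(1/3):ℝ) - 1)) t := by
    intro t ht
    apply continuousOn_const.mul
    intro y hy
    exact (Real.continuousAt_rpow_const y _ (Or.inl (ht y hy))).continuousWithinAt
  have hgint : IntegrableOn g (Set.Ioi 1) := by
    apply Integrable.mono'
      ((integrableOn_Ioi_rpow_of_lt (a := (-(1/3):ℝ)-1) (by norm_num) one_pos).const_mul (1/3))
    · exact (ContinuousOn.mul
        (hcontpow _ (fun y hy => by rintro rfl; exact absurd hy (by norm_num)))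
        hvc.continuousOn).aestronglyMeasurable measurableSet_Ioi
    · filter_upwards [ae_restrict_mem measurableSet_Ioi] with s hs
      have hs0 : (0:ℝ) < s := lt_trans one_pos hs
      have h1 : |(-(1/3) * s ^ ((-(1/3):ℝ) - 1))| = 1/3 * s ^ ((-(1/3):ℝ) - 1) := by
        rw [abs_mul, abs_of_nonneg (Real.rpow_nonneg hs0.le _)]
        norm_num
      calc ‖g s‖ = |(-(1/3) * s ^ ((-(1/3):ℝ) - 1))| * |v s| := abs_mul _ _
        _ ≤ 1/3 * s ^ ((-(1/3):ℝ) - 1) * 1 := by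
            rw [h1]; exact mul_le_mul_of_nonneg_left (hvb s) (by positivity)
        _ = 1/3 * s ^ ((-(1/3):ℝ) - 1) := mul_one _
  have hIBP : ∀ T : ℝ, 1 ≤ T → ∫ s in (1:ℝ)..T, w s * s ^ (-(1/3):ℝ)
      = T ^ (-(1/3):ℝ) * v T - 1 ^ (-(1/3):ℝ) * v 1 - ∫ s in (1:ℝ)..T, g s := by
    intro T hT
    have huIcc : Set.uIcc (1:ℝ) T = Set.Icc 1 T := Set.uIcc_of_le hT
    have hu : ∀ y ∈ Set.uIcc (1:ℝ) T, HasDerivAt (fun s : ℝ => s ^ (-(1/3):ℝ))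
        (-(1/3) * y ^ ((-(1/3):ℝ)-1)) y := by
      intro y hy; rw [huIcc] at hy
      exact Real.hasDerivAt_rpow_const (Or.inl (by intro h; rw [h] at hy; linarith [hy.1]))
    have hv' : ∀ y ∈ Set.uIcc (1:ℝ) T, HasDerivAt v (w y) y := fun y _ => hv y
    have hu'int : IntervalIntegrable (fun y : ℝ => -(1/3) * y ^ ((-(1/3):ℝ)-1)) volume 1 T := by
      apply ContinuousOn.intervalIntegrable
      rw [huIcc]
      exact hcontpow _ (fun y hy => by intro h; rw [h] at hy; linarith [hy.1])
    have hkey := intervalIntegral.integral_mul_deriv_eq_deriv_mul hu hv' hu'int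
      (hwc.intervalIntegrable 1 T)
    rw [← hkey]
    apply intervalIntegral.integral_congr
    intro y _
    exact mul_comm _ _
  have h1 : Tendsto (fun T : ℝ => T ^ (-(1/3):ℝ) * v T) atTop (𝓝 0) := by
    apply squeeze_zero_norm' (a := fun T : ℝ => T ^ (-(1/3):ℝ))
    · filter_upwards [eventually_ge_atTop (0:ℝ)] with T hT
      calc ‖T ^ (-(1/3):ℝ) * v T‖ = |T ^ (-(1/3):ℝ)| * |v T| := abs_mul _ _
        _ ≤ T ^ (-(1/3):ℝ) * 1 := by
            rw [abs_of_nonneg (Real.rpow_nonneg hT _)]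
            exact mul_le_mul_of_nonneg_left (hvb T) (Real.rpow_nonneg hT _)
        _ = T ^ (-(1/3):ℝ) := mul_one _
    · exact tendsto_rpow_neg_atTop (by norm_num)
  have h2 : Tendsto (fun T : ℝ => ∫ s in (1:ℝ)..T, g s) atTop (𝓝 (∫ s in Set.Ioi 1, g s)) :=
    intervalIntegral_tendsto_integral_Ioi 1 hgint tendsto_id
  refine ⟨(∫ s in (0:ℝ)..1, w s * s ^ (-(1/3):ℝ)) +
    (0 - 1 ^ (-(1/3):ℝ) * v 1 - ∫ s in Set.Ioi 1, g s), ?_⟩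
  have hfull : Tendsto (fun T : ℝ => (∫ s in (0:ℝ)..1, w s * s ^ (-(1/3):ℝ)) +
      (T ^ (-(1/3):ℝ) * v T - 1 ^ (-(1/3):ℝ) * v 1 - ∫ s in (1:ℝ)..T, g s)) atTop
      (𝓝 ((∫ s in (0:ℝ)..1, w s * s ^ (-(1/3):ℝ)) +
        (0 - 1 ^ (-(1/3):ℝ) * v 1 - ∫ s in Set.Ioi 1, g s))) :=
    tendsto_const_nhds.add ((h1.sub_const _).sub h2)
  apply Tendsto.congr' _ hfull
  filter_upwards [eventually_ge_atTop (1:ℝ)] with T hT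
  rw [← hIBP T hT, integral_add_adjacent_intervals (hii 0 1) (hii 1 T)]

lemma hiiA : ∀ a b : ℝ, IntervalIntegrable (fun s => Real.cos s * s ^ (-(1/3):ℝ)) volume a b :=
  fun a b => (intervalIntegral.intervalIntegrable_rpow' (by norm_num)).continuousOn_mul
    Real.continuous_cos.continuousOn

lemma hiiB : ∀ a b : ℝ, IntervalIntegrable (fun s => Real.sin s * s ^ (-(1/3):ℝ)) volume a b :=
  fun a b => (intervalIntegral.intervalIntegrable_rpow' (by norm_num)).continuousOn_mul
    Real.continuous_sin.continuousOn

lemma decomp_cos (θ T : ℝ) : ∫ s in (0:ℝ)..T, Real.cos (θ - s) * s ^ (-(1/3):ℝ)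
    = Real.cos θ * (∫ s in (0:ℝ)..T, Real.cos s * s ^ (-(1/3):ℝ))
      + Real.sin θ * (∫ s in (0:ℝ)..T, Real.sin s * s ^ (-(1/3):ℝ)) := by
  rw [← intervalIntegral.integral_const_mul, ← intervalIntegral.integral_const_mul,
    ← intervalIntegral.integral_add ((hiiA 0 T).const_mul _) ((hiiB 0 T).const_mul _)]
  apply intervalIntegral.integral_congr
  intro s _
  simp only [Real.cos_sub]
  ring

lemma decomp_sin (θ T : ℝ) : ∫ s in (0:ℝ)..T, Real.sin (θ - s) * s ^ (-(1/3):ℝ)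
    = Real.sin θ * (∫ s in (0:ℝ)..T, Real.cos s * s ^ (-(1/3):ℝ))
      - Real.cos θ * (∫ s in (0:ℝ)..T, Real.sin s * s ^ (-(1/3):ℝ)) := by
  rw [← intervalIntegral.integral_const_mul, ← intervalIntegral.integral_const_mul,
    ← intervalIntegral.integral_sub ((hiiA 0 T).const_mul _) ((hiiB 0 T).const_mul _)]
  apply intervalIntegral.integral_congr
  intro s _
  simp only [Real.sin_sub]
  ring

/-- For `α` outside `√2/3 + 2πℤ`, the integrals defining `M₊` converge, `M₊` is
differentiable at `α`, and `M₊'(α) = I₁(α) - I₂(α)` with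
`I₁(α) = κ ∫₀^∞ F(α,s) ds` and `I₂(α) = √(2/κ) · lim_{T→∞} ∫₀^T sin(α-s) s^{-1/3} ds`. -/
theorem Mplus_hasDerivAt
    (α : ℝ) (hα : ∀ k : ℤ, α ≠ Real.sqrt 2 / 3 + 2 * π * k) :
    MeasureTheory.IntegrableOn (fun s => melInt α s) (Set.Ioi 0) ∧
    (∃ Lc : ℝ, Tendsto
      (fun T => ∫ s in (0 : ℝ)..T, Real.cos (α - s) * s ^ (-(1 / 3) : ℝ))
      atTop (𝓝 Lc)) ∧
    MeasureTheory.IntegrableOn (fun s => Fder α s) (Set.Ioi 0) ∧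
    ∃ Ls : ℝ,
      Tendsto (fun T => ∫ s in (0 : ℝ)..T, Real.sin (α - s) * s ^ (-(1 / 3) : ℝ))
        atTop (𝓝 Ls) ∧
      HasDerivAt Mplus
        (kap * (∫ s in Set.Ioi (0 : ℝ), Fder α s) - Real.sqrt (2 / kap) * Ls) α := by
  have hk := kap_pos
  -- α avoids the singular set
  have hcosα : Real.cos (α - Real.sqrt 2 / 3) ≠ 1 := by
    intro h
    obtain ⟨n, hn⟩ := (Real.cos_eq_one_iff _).mp h
    exact hα n (by linear_combination -hn)
  -- a closed ball around α avoiding the singular set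
  have hUopen : IsOpen {x : ℝ | Real.cos (x - Real.sqrt 2 / 3) < 1} :=
    isOpen_lt (Real.continuous_cos.comp (continuous_id.sub continuous_const)) continuous_const
  have hαU : α ∈ {x : ℝ | Real.cos (x - Real.sqrt 2 / 3) < 1} :=
    lt_of_le_of_ne (Real.cos_le_one _) hcosα
  obtain ⟨ε, hε, hball⟩ := Metric.nhds_basis_closedBall.mem_iff.mp (hUopen.mem_nhds hαU)
  have hbpos : ∀ x ∈ Metric.closedBall α ε, ∀ s : ℝ, 0 ≤ s → 0 < bfun x s :=
    fun x hx s hs => bfun_pos (ne_of_lt (hball hx)) hs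
  -- the tail threshold
  set S : ℝ := max 2 ((2/kap) ^ ((3:ℝ)/2)) with hSdef
  have hS1 : (1:ℝ) ≤ S := le_trans (by norm_num) (le_max_left _ _)
  have hS0 : (0:ℝ) < S := lt_of_lt_of_le one_pos hS1
  have htail23 : ∀ s : ℝ, S ≤ s → 2/kap ≤ s ^ ((2:ℝ)/3) := by
    intro s hs
    have h1 : (2/kap) ^ ((3:ℝ)/2) ≤ s := le_trans (le_max_right _ _) hs
    have h0 : (0:ℝ) ≤ 2/kap := by positivity
    calc 2/kap = ((2/kap) ^ ((3:ℝ)/2)) ^ ((2:ℝ)/3) := by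
          rw [← Real.rpow_mul h0]; norm_num
      _ ≤ s ^ ((2:ℝ)/3) := Real.rpow_le_rpow (Real.rpow_nonneg h0 _) h1 (by norm_num)
  -- compact minimum of bfun
  set K : Set (ℝ × ℝ) := Metric.closedBall α ε ×ˢ Set.Icc 0 S with hKdef
  have hKc : IsCompact K := (isCompact_closedBall _ _).prod isCompact_Icc
  have hKne : K.Nonempty := ⟨(α, 0), Set.mem_prod.mpr
    ⟨Metric.mem_closedBall_self hε.le, ⟨le_refl 0, hS0.le⟩⟩⟩
  obtain ⟨⟨x₀, s₀⟩, hmemK, hminK⟩ := hKc.exists_isMinOn hKne continuous_bfun.continuousOn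
  set m : ℝ := bfun x₀ s₀ with hmdef
  have hm : 0 < m := hbpos x₀ hmemK.1 s₀ hmemK.2.1
  have hmle : ∀ x ∈ Metric.closedBall α ε, ∀ s ∈ Set.Icc (0:ℝ) S, m ≤ bfun x s :=
    fun x hx s hs => isMinOn_iff.mp hminK (x, s) (Set.mem_prod.mpr ⟨hx, hs⟩)
  -- the bound function
  set C1 : ℝ := S ^ ((2:ℝ)/3) * m ^ (-(3/2):ℝ) + 3*kap*S ^ ((4:ℝ)/3)*m ^ (-(5/2):ℝ) with hC1def
  set C2 : ℝ := (kap^2/4) ^ (-(3/2):ℝ) + 3*kap*(kap^2/4) ^ (-(5/2):ℝ) with hC2def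
  set bnd : ℝ → ℝ := fun s => if s ≤ S then C1 else C2 * s ^ (-(4:ℝ)/3) with hbnddef
  have hC1pos : 0 < C1 := by positivity
  -- pointwise bounds
  have hbndM : ∀ x ∈ Metric.closedBall α ε, ∀ s : ℝ, 0 < s → |melInt x s| ≤ bnd s := by
    intro x hx s hs
    have hbx : 0 < bfun x s := hbpos x hx s hs.le
    have habs : |melInt x s| = s ^ ((2:ℝ)/3) * |Real.sin (x - s)| * (bfun x s) ^ (-(3/2):ℝ) := by
      rw [melInt_eq, abs_mul, abs_mul, abs_of_nonneg (Real.rpow_nonneg hs.le _),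
        abs_of_nonneg (Real.rpow_nonneg hbx.le _)]
    rcases le_or_gt s S with hsS | hsS
    · have hbm := hmle x hx s ⟨hs.le, hsS⟩
      have h3 : (bfun x s) ^ (-(3/2):ℝ) ≤ m ^ (-(3/2):ℝ) :=
        Real.rpow_le_rpow_of_nonpos hm hbm (by norm_num)
      have h23 : s ^ ((2:ℝ)/3) ≤ S ^ ((2:ℝ)/3) := Real.rpow_le_rpow hs.le hsS (by norm_num)
      have : |melInt x s| ≤ S ^ ((2:ℝ)/3) * m ^ (-(3/2):ℝ) := by
        rw [habs]
        have h1 : s ^ ((2:ℝ)/3) * |Real.sin (x - s)| ≤ S ^ ((2:ℝ)/3) :=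
          le_trans (mul_le_mul_of_nonneg_left (abs_sin_le_one _)
            (Real.rpow_nonneg hs.le _)) (by rw [mul_one]; exact h23)
        exact mul_le_mul h1 h3 (Real.rpow_nonneg hbx.le _)
          (Real.rpow_nonneg (le_max_iff.mpr (Or.inl (by norm_num))) _)
      rw [hbnddef]; simp only [if_pos hsS]
      refine le_trans this ?_
      rw [hC1def]
      have hnn : (0:ℝ) ≤ 3*kap*S ^ ((4:ℝ)/3)*m ^ (-(5/2):ℝ) :=
        mul_nonneg (mul_nonneg (mul_nonneg (by norm_num) hk.le)
          (Real.rpow_nonneg hS0.le _)) (Real.rpow_nonneg hm.le _)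
      linarith
    · -- tail
      have htail := bfun_tail (x := x) hs.le (htail23 s hsS.le)
      have hq : (0:ℝ) < kap^2/4 * s ^ ((4:ℝ)/3) := by positivity
      have h3 : (bfun x s) ^ (-(3/2):ℝ) ≤ (kap^2/4 * s ^ ((4:ℝ)/3)) ^ (-(3/2):ℝ) :=
        Real.rpow_le_rpow_of_nonpos hq htail (by norm_num)
      have hsplit : (kap^2/4 * s ^ ((4:ℝ)/3)) ^ (-(3/2):ℝ)
          = (kap^2/4) ^ (-(3/2):ℝ) * s ^ (-(2:ℝ)) := by
        rw [Real.mul_rpow (by positivity) (Real.rpow_nonneg hs.le _),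
          ← Real.rpow_mul hs.le]
        norm_num
      have hcomb : s ^ ((2:ℝ)/3) * s ^ (-(2:ℝ)) = s ^ (-(4:ℝ)/3) := by
        rw [← Real.rpow_add hs]; norm_num
      have : |melInt x s| ≤ (kap^2/4) ^ (-(3/2):ℝ) * s ^ (-(4:ℝ)/3) := by
        rw [habs]
        calc s ^ ((2:ℝ)/3) * |Real.sin (x - s)| * (bfun x s) ^ (-(3/2):ℝ)
            ≤ s ^ ((2:ℝ)/3) * 1 * ((kap^2/4) ^ (-(3/2):ℝ) * s ^ (-(2:ℝ))) := by
              apply mul_le_mul _ (le_trans h3 (le_of_eq hsplit)) (Real.rpow_nonneg hbx.le _)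
                (by positivity)
              exact mul_le_mul_of_nonneg_left (abs_sin_le_one _) (Real.rpow_nonneg hs.le _)
          _ = (kap^2/4) ^ (-(3/2):ℝ) * (s ^ ((2:ℝ)/3) * s ^ (-(2:ℝ))) := by ring
          _ = (kap^2/4) ^ (-(3/2):ℝ) * s ^ (-(4:ℝ)/3) := by rw [hcomb]
      rw [hbnddef]; simp only [if_neg (not_le.mpr hsS)]
      refine le_trans this ?_
      rw [hC2def]
      have h2 : (0:ℝ) ≤ 3*kap*(kap^2/4) ^ (-(5/2):ℝ) := by positivity
      nlinarith [Real.rpow_nonneg hs.le (-(4:ℝ)/3)]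
  have hbndF : ∀ x ∈ Metric.closedBall α ε, ∀ s : ℝ, 0 < s → |Fder x s| ≤ bnd s := by
    intro x hx s hs
    have hbx : 0 < bfun x s := hbpos x hx s hs.le
    have h43nn : (0:ℝ) ≤ 3*kap*s ^ ((4:ℝ)/3) :=
      mul_nonneg (mul_nonneg (by norm_num) hk.le) (Real.rpow_nonneg hs.le _)
    have habs : |Fder x s| ≤ s ^ ((2:ℝ)/3) * (bfun x s) ^ (-(3/2):ℝ)
        + 3*kap*s ^ ((4:ℝ)/3) * (bfun x s) ^ (-(5/2):ℝ) := by
      rw [Fder_eq]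
      refine le_trans (abs_sub _ _) (add_le_add ?_ ?_)
      · calc |s ^ ((2:ℝ)/3) * Real.cos (x - s) * (bfun x s) ^ (-(3/2):ℝ)|
            = s ^ ((2:ℝ)/3) * |Real.cos (x - s)| * (bfun x s) ^ (-(3/2):ℝ) := by
              rw [abs_mul, abs_mul, abs_of_nonneg (Real.rpow_nonneg hs.le _),
                abs_of_nonneg (Real.rpow_nonneg hbx.le _)]
          _ ≤ s ^ ((2:ℝ)/3) * 1 * (bfun x s) ^ (-(3/2):ℝ) :=
              mul_le_mul_of_nonneg_right (mul_le_mul_of_nonneg_left (abs_cos_le_one _)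
                (Real.rpow_nonneg hs.le _)) (Real.rpow_nonneg hbx.le _)
          _ = s ^ ((2:ℝ)/3) * (bfun x s) ^ (-(3/2):ℝ) := by ring
      · calc |3*kap*s ^ ((4:ℝ)/3) * Real.sin (x - s) ^ 2 * (bfun x s) ^ (-(5/2):ℝ)|
            = 3*kap*s ^ ((4:ℝ)/3) * Real.sin (x - s) ^ 2 * (bfun x s) ^ (-(5/2):ℝ) := by
              rw [abs_of_nonneg (mul_nonneg (mul_nonneg h43nn (sq_nonneg _))
                (Real.rpow_nonneg hbx.le _))]
          _ ≤ 3*kap*s ^ ((4:ℝ)/3) * 1 * (bfun x s) ^ (-(5/2):ℝ) :=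
              mul_le_mul_of_nonneg_right (mul_le_mul_of_nonneg_left (Real.sin_sq_le_one _)
                h43nn) (Real.rpow_nonneg hbx.le _)
          _ = 3*kap*s ^ ((4:ℝ)/3) * (bfun x s) ^ (-(5/2):ℝ) := by ring
    rcases le_or_gt s S with hsS | hsS
    · have hbm := hmle x hx s ⟨hs.le, hsS⟩
      have h3 : (bfun x s) ^ (-(3/2):ℝ) ≤ m ^ (-(3/2):ℝ) :=
        Real.rpow_le_rpow_of_nonpos hm hbm (by norm_num)
      have h5 : (bfun x s) ^ (-(5/2):ℝ) ≤ m ^ (-(5/2):ℝ) :=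
        Real.rpow_le_rpow_of_nonpos hm hbm (by norm_num)
      have h23 : s ^ ((2:ℝ)/3) ≤ S ^ ((2:ℝ)/3) := Real.rpow_le_rpow hs.le hsS (by norm_num)
      have h43 : s ^ ((4:ℝ)/3) ≤ S ^ ((4:ℝ)/3) := Real.rpow_le_rpow hs.le hsS (by norm_num)
      rw [hbnddef]; simp only [if_pos hsS]
      refine le_trans habs ?_
      rw [hC1def]
      refine add_le_add ?_ ?_
      · exact mul_le_mul h23 h3 (Real.rpow_nonneg hbx.le _) (Real.rpow_nonneg hS0.le _)
      · refine mul_le_mul ?_ h5 (Real.rpow_nonneg hbx.le _)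
          (mul_nonneg (mul_nonneg (by norm_num) hk.le) (Real.rpow_nonneg hS0.le _))
        exact mul_le_mul_of_nonneg_left h43 (mul_nonneg (by norm_num) hk.le)
    · have htail := bfun_tail (x := x) hs.le (htail23 s hsS.le)
      have hq : (0:ℝ) < kap^2/4 * s ^ ((4:ℝ)/3) := by positivity
      have h3 : (bfun x s) ^ (-(3/2):ℝ) ≤ (kap^2/4 * s ^ ((4:ℝ)/3)) ^ (-(3/2):ℝ) :=
        Real.rpow_le_rpow_of_nonpos hq htail (by norm_num)
      have h5 : (bfun x s) ^ (-(5/2):ℝ) ≤ (kap^2/4 * s ^ ((4:ℝ)/3)) ^ (-(5/2):ℝ) :=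
        Real.rpow_le_rpow_of_nonpos hq htail (by norm_num)
      have hsplit3 : (kap^2/4 * s ^ ((4:ℝ)/3)) ^ (-(3/2):ℝ)
          = (kap^2/4) ^ (-(3/2):ℝ) * s ^ (-(2:ℝ)) := by
        rw [Real.mul_rpow (by positivity) (Real.rpow_nonneg hs.le _),
          ← Real.rpow_mul hs.le]
        norm_num
      have hsplit5 : (kap^2/4 * s ^ ((4:ℝ)/3)) ^ (-(5/2):ℝ)
          = (kap^2/4) ^ (-(5/2):ℝ) * s ^ (-(10:ℝ)/3) := by
        rw [Real.mul_rpow (by positivity) (Real.rpow_nonneg hs.le _),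
          ← Real.rpow_mul hs.le]
        norm_num
      have h1s : (1:ℝ) ≤ s := le_trans hS1 hsS.le
      have hcomb1 : s ^ ((2:ℝ)/3) * s ^ (-(2:ℝ)) = s ^ (-(4:ℝ)/3) := by
        rw [← Real.rpow_add hs]; norm_num
      have hcomb2 : s ^ ((4:ℝ)/3) * s ^ (-(10:ℝ)/3) = s ^ (-(2:ℝ)) := by
        rw [← Real.rpow_add hs]; norm_num
      have hmono : s ^ (-(2:ℝ)) ≤ s ^ (-(4:ℝ)/3) :=
        Real.rpow_le_rpow_of_exponent_le h1s (by norm_num)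
      rw [hbnddef]; simp only [if_neg (not_le.mpr hsS)]
      refine le_trans habs ?_
      rw [hC2def]
      have hterm1 : s ^ ((2:ℝ)/3) * (bfun x s) ^ (-(3/2):ℝ)
          ≤ (kap^2/4) ^ (-(3/2):ℝ) * s ^ (-(4:ℝ)/3) := by
        calc s ^ ((2:ℝ)/3) * (bfun x s) ^ (-(3/2):ℝ)
            ≤ s ^ ((2:ℝ)/3) * ((kap^2/4) ^ (-(3/2):ℝ) * s ^ (-(2:ℝ))) := by
              rw [← hsplit3]
              exact mul_le_mul_of_nonneg_left h3 (Real.rpow_nonneg hs.le _)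
          _ = (kap^2/4) ^ (-(3/2):ℝ) * (s ^ ((2:ℝ)/3) * s ^ (-(2:ℝ))) := by ring
          _ = (kap^2/4) ^ (-(3/2):ℝ) * s ^ (-(4:ℝ)/3) := by rw [hcomb1]
      have hterm2 : 3*kap*s ^ ((4:ℝ)/3) * (bfun x s) ^ (-(5/2):ℝ)
          ≤ 3*kap*(kap^2/4) ^ (-(5/2):ℝ) * s ^ (-(4:ℝ)/3) := by
        calc 3*kap*s ^ ((4:ℝ)/3) * (bfun x s) ^ (-(5/2):ℝ)
            ≤ 3*kap*s ^ ((4:ℝ)/3) * ((kap^2/4) ^ (-(5/2):ℝ) * s ^ (-(10:ℝ)/3)) := by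
              rw [← hsplit5]
              apply mul_le_mul_of_nonneg_left h5
              have := Real.rpow_nonneg hs.le ((4:ℝ)/3); positivity
          _ = 3*kap*(kap^2/4) ^ (-(5/2):ℝ) * (s ^ ((4:ℝ)/3) * s ^ (-(10:ℝ)/3)) := by ring
          _ = 3*kap*(kap^2/4) ^ (-(5/2):ℝ) * s ^ (-(2:ℝ)) := by rw [hcomb2]
          _ ≤ 3*kap*(kap^2/4) ^ (-(5/2):ℝ) * s ^ (-(4:ℝ)/3) := by
              apply mul_le_mul_of_nonneg_left hmono
              positivity
      calc s ^ ((2:ℝ)/3) * (bfun x s) ^ (-(3/2):ℝ)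
            + 3*kap*s ^ ((4:ℝ)/3) * (bfun x s) ^ (-(5/2):ℝ)
          ≤ (kap^2/4) ^ (-(3/2):ℝ) * s ^ (-(4:ℝ)/3)
            + 3*kap*(kap^2/4) ^ (-(5/2):ℝ) * s ^ (-(4:ℝ)/3) := add_le_add hterm1 hterm2
        _ = ((kap^2/4) ^ (-(3/2):ℝ) + 3*kap*(kap^2/4) ^ (-(5/2):ℝ)) * s ^ (-(4:ℝ)/3) := by ring
  -- integrability of the bound
  have hbndint : IntegrableOn bnd (Set.Ioi 0) := by
    rw [← Set.Ioc_union_Ioi_eq_Ioi hS0.le]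
    apply IntegrableOn.union
    · apply IntegrableOn.congr_fun (f := fun _ : ℝ => C1)
      · exact integrableOn_const measure_Ioc_lt_top.ne
      · intro s hs
        rw [hbnddef]; simp only [if_pos hs.2]
      · exact measurableSet_Ioc
    · apply IntegrableOn.congr_fun
        (f := fun s : ℝ => C2 * s ^ (-(4:ℝ)/3))
      · exact (integrableOn_Ioi_rpow_of_lt (by norm_num) hS0).const_mul C2
      · intro s hs
        rw [hbnddef]; simp only [if_neg (not_le.mpr (Set.mem_Ioi.mp hs))]
      · exact measurableSet_Ioi
  -- integrability of melInt α
  have hbα : ∀ s ∈ Set.Ioi (0:ℝ), bfun α s ≠ 0 :=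
    fun s hs => (hbpos α (Metric.mem_closedBall_self hε.le) s (le_of_lt hs)).ne'
  have hMint : MeasureTheory.IntegrableOn (fun s => melInt α s) (Set.Ioi 0) := by
    apply Integrable.mono' hbndint
      ((continuousOn_melInt hbα).aestronglyMeasurable measurableSet_Ioi)
    filter_upwards [ae_restrict_mem measurableSet_Ioi] with s hs
    exact hbndM α (Metric.mem_closedBall_self hε.le) s hs
  -- dominated differentiation under the integral sign
  obtain ⟨hFint, hDer⟩ := hasDerivAt_integral_of_dominated_loc_of_deriv_le
    (μ := volume.restrict (Set.Ioi 0)) (F := fun x s => melInt x s)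
    (F' := fun x s => Fder x s) (x₀ := α) (bound := bnd) (Metric.ball_mem_nhds α hε)
    (by
      filter_upwards [Metric.closedBall_mem_nhds α hε] with x hx
      exact (continuousOn_melInt (fun s hs => (hbpos x hx s (le_of_lt hs)).ne')).aestronglyMeasurable
        measurableSet_Ioi)
    hMint
    ((continuousOn_Fder hbα).aestronglyMeasurable measurableSet_Ioi)
    (by
      filter_upwards [ae_restrict_mem measurableSet_Ioi] with s hs
      intro x hx
      rw [Real.norm_eq_abs]
      exact hbndF x (Metric.ball_subset_closedBall hx) s hs)
    hbndint
    (by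
      filter_upwards [ae_restrict_mem measurableSet_Ioi] with s hs
      intro x hx
      exact hasDerivAt_melInt hs
        (hbpos x (Metric.ball_subset_closedBall hx) s (le_of_lt hs)).ne')
  -- oscillatory parts
  obtain ⟨A, hA⟩ := osc_tendsto Real.sin Real.cos (fun x => Real.hasDerivAt_sin x)
    (fun x => Real.abs_sin_le_one x) Real.continuous_cos
  obtain ⟨B, hB⟩ := osc_tendsto (fun x => -Real.cos x) Real.sin
    (fun x => by have h := (Real.hasDerivAt_cos x).neg; rw [neg_neg] at h; exact h)
    (fun x => by rw [abs_neg]; exact Real.abs_cos_le_one x) Real.continuous_sin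
  have hLc : ∀ θ : ℝ, Tendsto (fun T => ∫ s in (0:ℝ)..T, Real.cos (θ - s) * s ^ (-(1/3):ℝ))
      atTop (𝓝 (Real.cos θ * A + Real.sin θ * B)) := by
    intro θ
    have := (hA.const_mul (Real.cos θ)).add (hB.const_mul (Real.sin θ))
    exact this.congr (fun T => (decomp_cos θ T).symm)
  have hLs : Tendsto (fun T => ∫ s in (0:ℝ)..T, Real.sin (α - s) * s ^ (-(1/3):ℝ))
      atTop (𝓝 (Real.sin α * A - Real.cos α * B)) := by
    have := (hA.const_mul (Real.sin α)).sub (hB.const_mul (Real.cos α))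
    exact this.congr (fun T => (decomp_sin α T).symm)
  refine ⟨hMint, ⟨_, hLc α⟩, hFint, Real.sin α * A - Real.cos α * B, hLs, ?_⟩
  have hMp : Mplus = fun θ => kap * (∫ s in Set.Ioi (0:ℝ), melInt θ s) +
      Real.sqrt (2/kap) * (Real.cos θ * A + Real.sin θ * B) := by
    funext θ
    unfold Mplus
    rw [(hLc θ).limUnder_eq]
  rw [hMp]
  have H2 : HasDerivAt (fun θ => Real.cos θ * A + Real.sin θ * B)
      (-Real.sin α * A + Real.cos α * B) α :=
    ((Real.hasDerivAt_cos α).mul_const A).add ((Real.hasDerivAt_sin α).mul_const B)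
  have H := (hDer.const_mul kap).add (H2.const_mul (Real.sqrt (2/kap)))
  rw [show kap * (∫ s in Set.Ioi (0:ℝ), Fder α s) - Real.sqrt (2/kap) * (Real.sin α * A - Real.cos α * B)
      = kap * (∫ s in Set.Ioi (0:ℝ), Fder α s) + Real.sqrt (2/kap) * (-Real.sin α * A + Real.cos α * B) by ring]
  exact H
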